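/- For every integer t ≥ 1, the sum of the squared weights satisfies Σ_{i=1}^t (α_t^i)² ≤ 2H/t. -/

import Mathlib

/-- Learning rate `α_t = (H+1)/(H+t)`. -/
noncomputable def lr (H : ℕ) (t : ℕ) : ℝ := ((H : ℝ) + 1) / ((H : ℝ) + t)

/-- Weights `α_t^0 = ∏_{j=1}^t (1 - α_j)` and `α_t^i = α_i ∏_{j=i+1}^t (1 - α_j)` for `i ≥ 1`. -/
noncomputable def alphaW (H : ℕ) (t i : ℕ) : ℝ :=
  if i = 0 then ∏ j ∈ Finset.Icc 1 t, (1 - lr H j)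
  else lr H i * ∏ j ∈ Finset.Icc (i + 1) t, (1 - lr H j)

lemma lr_nonneg (H j : ℕ) : 0 ≤ lr H j := by
  unfold lr; positivity

lemma lr_le_one (H j : ℕ) (hj : 1 ≤ j) : lr H j ≤ 1 := by
  unfold lr
  rw [div_le_one (by positivity)]
  have : (1:ℝ) ≤ j := by exact_mod_cast hj
  linarith

lemma one_sub_lr_nonneg (H j : ℕ) (hj : 1 ≤ j) : 0 ≤ 1 - lr H j :=
  sub_nonneg.mpr (lr_le_one H j hj)

lemma alphaW_nonneg (H t i : ℕ) (hi : 1 ≤ i) : 0 ≤ alphaW H t i := by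
  rw [alphaW, if_neg (by omega)]
  refine mul_nonneg (lr_nonneg H i) (Finset.prod_nonneg fun j hj => ?_)
  simp only [Finset.mem_Icc] at hj
  exact one_sub_lr_nonneg H j (by omega)

lemma prod_bound (H i : ℕ) (hi : 1 ≤ i) (t : ℕ) (ht : i ≤ t) :
    (∏ j ∈ Finset.Icc (i+1) t, (1 - lr H j)) ≤ ((H:ℝ)+i)/((H:ℝ)+t) := by
  induction t, ht using Nat.le_induction with
  | base =>
      rw [Finset.Icc_eq_empty (by omega), Finset.prod_empty, div_self (by positivity)]
  | succ t ht ih =>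
      rw [Finset.prod_Icc_succ_top (by omega)]
      have hD : (0:ℝ) < (H:ℝ) + t + 1 := by positivity
      have h1 : 1 - lr H (t+1) = (t:ℝ)/((H:ℝ)+t+1) := by
        unfold lr; push_cast; field_simp
        ring
      have h2 : 1 - lr H (t+1) ≤ ((H:ℝ)+t)/((H:ℝ)+t+1) := by
        rw [h1]; gcongr; linarith [Nat.cast_nonneg (α := ℝ) H]
      have h3 : (∏ j ∈ Finset.Icc (i+1) t, (1 - lr H j)) * (1 - lr H (t+1)) ≤
          (((H:ℝ)+i)/((H:ℝ)+t)) * (((H:ℝ)+t)/((H:ℝ)+t+1)) := by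
        apply mul_le_mul ih h2 (one_sub_lr_nonneg H (t+1) (by omega))
        positivity
      have ht1 : (1:ℝ) ≤ t := by exact_mod_cast hi.trans ht
      have h4 : (((H:ℝ)+i)/((H:ℝ)+t)) * (((H:ℝ)+t)/((H:ℝ)+t+1)) = ((H:ℝ)+i)/((H:ℝ)+t+1) := by
        have hne : ((H:ℝ)+t) ≠ 0 := by
          have : (0:ℝ) ≤ H := Nat.cast_nonneg H
          intro h; linarith
        field_simp
      have h5 := h3.trans_eq h4
      have heq : ((H:ℝ) + ((t+1 : ℕ) : ℝ)) = (H:ℝ)+t+1 := by push_cast; ring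
      rw [heq]
      exact h5

lemma sum_le_one (H : ℕ) (t : ℕ) (ht : 1 ≤ t) :
    (∑ i ∈ Finset.Icc 1 t, alphaW H t i) ≤ 1 := by
  induction t, ht using Nat.le_induction with
  | base =>
      have : alphaW H 1 1 = 1 := by
        rw [alphaW, if_neg (by omega), Finset.Icc_eq_empty (by omega), Finset.prod_empty,
          mul_one, lr, Nat.cast_one, div_self (by positivity)]
      simp [this]
  | succ t ht ih =>
      rw [Finset.sum_Icc_succ_top (by omega)]
      have key : ∀ i ∈ Finset.Icc 1 t, alphaW H (t+1) i = alphaW H t i * (1 - lr H (t+1)) := by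
        intro i hi
        simp only [Finset.mem_Icc] at hi
        rw [alphaW, if_neg (by omega), alphaW, if_neg (by omega),
          Finset.prod_Icc_succ_top (by omega)]
        ring
      have hlast : alphaW H (t+1) (t+1) = lr H (t+1) := by
        rw [alphaW, if_neg (by omega), Finset.Icc_eq_empty (by omega), Finset.prod_empty, mul_one]
      rw [Finset.sum_congr rfl key, ← Finset.sum_mul, hlast]
      have h1 := one_sub_lr_nonneg H (t+1) (by omega)
      have h2 := lr_le_one H (t+1) (by omega)
      nlinarith [ih]

lemma alphaW_le (H : ℕ) (hH : 1 ≤ H) (t i : ℕ) (hi : 1 ≤ i) (hit : i ≤ t) :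
    alphaW H t i ≤ 2 * (H:ℝ) / t := by
  have ht1 : (1:ℝ) ≤ t := by exact_mod_cast le_trans hi hit
  have hH1 : (1:ℝ) ≤ H := by exact_mod_cast hH
  have h1 : alphaW H t i ≤ ((H:ℝ)+1)/((H:ℝ)+t) := by
    rw [alphaW, if_neg (by omega)]
    calc lr H i * ∏ j ∈ Finset.Icc (i+1) t, (1 - lr H j)
        ≤ lr H i * (((H:ℝ)+i)/((H:ℝ)+t)) :=
          mul_le_mul_of_nonneg_left (prod_bound H i hi t hit) (lr_nonneg H i)
      _ = ((H:ℝ)+1)/((H:ℝ)+t) := by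
          rw [lr]
          have hi' : (0:ℝ) < (H:ℝ) + i := by
            have : (1:ℝ) ≤ i := by exact_mod_cast hi
            positivity
          have ht' : (0:ℝ) < (H:ℝ) + t := by positivity
          field_simp
  have h2 : ((H:ℝ)+1)/((H:ℝ)+t) ≤ 2 * (H:ℝ) / t := by
    rw [div_le_div_iff₀ (by positivity) (by linarith)]
    nlinarith
  linarith

/-- `∑_{i=1}^t (α_t^i)² ≤ 2H/t` for all `t ≥ 1`. -/
theorem alphaW_sq_sum_le (H : ℕ) (hH : 1 ≤ H) (t : ℕ) (ht : 1 ≤ t) :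
    (∑ i ∈ Finset.Icc 1 t, (alphaW H t i) ^ 2) ≤ 2 * (H : ℝ) / t := by
  have hc : (0:ℝ) ≤ 2 * (H:ℝ) / t := by positivity
  have step : (∑ i ∈ Finset.Icc 1 t, (alphaW H t i) ^ 2)
      ≤ ∑ i ∈ Finset.Icc 1 t, alphaW H t i * (2 * (H:ℝ) / t) := by
    apply Finset.sum_le_sum
    intro i hi
    simp only [Finset.mem_Icc] at hi
    rw [sq]
    exact mul_le_mul_of_nonneg_left (alphaW_le H hH t i hi.1 hi.2)
      (alphaW_nonneg H t i hi.1)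
  calc (∑ i ∈ Finset.Icc 1 t, (alphaW H t i) ^ 2)
      ≤ ∑ i ∈ Finset.Icc 1 t, alphaW H t i * (2 * (H:ℝ) / t) := step
    _ = (∑ i ∈ Finset.Icc 1 t, alphaW H t i) * (2 * (H:ℝ) / t) := by
        rw [Finset.sum_mul]
    _ ≤ 1 * (2 * (H:ℝ) / t) := mul_le_mul_of_nonneg_right (sum_le_one H t ht) hc
    _ = 2 * (H:ℝ) / t := one_mul _
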